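/- Let T = ℤx ⊕ ℤy be a rank-2 positive-definite lattice with Gram matrix [[4a, 2b],[2b, 4c]]. In N = U ⊕ U(2) ⊕ E8(2) with U = ℤe⊕ℤf and U(2) = ℤh⊕ℤk (so (h²)=(k²)=0, (h·k)=2), the assignment x ↦ e + 2af, y ↦ e + (2b−2a)f + h + (c−b+a)k is an isometric embedding of T into U ⊕ U(2) ⊂ N on which the character ε(z) = (z·(e+f)) mod 2 takes value 1 on both the images of x and y. -/
import Mathlib


/-!
We model the lattice `N = U ⊕ U(2) ⊕ E8(2)` as `ℤ¹²` with an explicit Gram matrix: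
coordinates 0,1 span the hyperbolic plane `U` (basis `e, f`), coordinates 2,3 span
`U(2)` (basis `h, k`), and coordinates 4,…,11 span `E8(2)` (the negative definite
even unimodular `E8` lattice with its form doubled; the E8 Dynkin diagram used is
the chain 4-5-6-7-8-9-10 with the extra node 11 attached to node 6).
-/

open Matrix

/-- Gram matrix of `N = U ⊕ U(2) ⊕ E8(2)`. -/
def NGram : Matrix (Fin 12) (Fin 12) ℤ :=
  !![0,1,0,0, 0,0,0,0,0,0,0,0;
     1,0,0,0, 0,0,0,0,0,0,0,0;
     0,0,0,2, 0,0,0,0,0,0,0,0;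
     0,0,2,0, 0,0,0,0,0,0,0,0;
     0,0,0,0, -4,2,0,0,0,0,0,0;
     0,0,0,0, 2,-4,2,0,0,0,0,0;
     0,0,0,0, 0,2,-4,2,0,0,0,2;
     0,0,0,0, 0,0,2,-4,2,0,0,0;
     0,0,0,0, 0,0,0,2,-4,2,0,0;
     0,0,0,0, 0,0,0,0,2,-4,2,0;
     0,0,0,0, 0,0,0,0,0,2,-4,0;
     0,0,0,0, 0,0,2,0,0,0,0,-4]

/-- The symmetric bilinear form of the lattice `N`. -/
def Nform (x y : Fin 12 → ℤ) : ℤ := x ⬝ᵥ NGram.mulVec y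

/-- The standard hyperbolic vector `e` of the `U` summand of `N`. -/
def eN : Fin 12 → ℤ := Pi.single 0 1

/-- The standard hyperbolic vector `f` of the `U` summand of `N`. -/
def fN : Fin 12 → ℤ := Pi.single 1 1

/-- The character `ε : N → ℤ/2`, `ε(x) = (x·(e+f)) mod 2`. -/
def epsN (x : Fin 12 → ℤ) : ZMod 2 := ((Nform x (eN + fN) : ℤ) : ZMod 2)

/-- The standard generator `h` of the `U(2)` summand of `N`. -/
def hN : Fin 12 → ℤ := Pi.single 2 1

/-- The standard generator `k` of the `U(2)` summand of `N`. -/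
def kN : Fin 12 → ℤ := Pi.single 3 1

/-- Let `T = ℤx ⊕ ℤy` be a rank-2 positive definite lattice with Gram
matrix `[[4a, 2b], [2b, 4c]]`.  Then `x ↦ e + 2a·f`, `y ↦ e + (2b−2a)·f + h + (c−b+a)·k`
is an isometric (injective) embedding of `T` into `U ⊕ U(2) ⊂ N` on which the character
`ε` takes the value `1` on the images of both `x` and `y`. -/
theorem stmt_17 (a b c : ℤ) (hpos : 0 < a) (hposdet : 0 < 4 * (a * c) - b * b) :
    Nform (eN + (2 * a) • fN) (eN + (2 * a) • fN) = 4 * a ∧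
    Nform (eN + (2 * b - 2 * a) • fN + hN + (c - b + a) • kN)
          (eN + (2 * b - 2 * a) • fN + hN + (c - b + a) • kN) = 4 * c ∧
    Nform (eN + (2 * a) • fN) (eN + (2 * b - 2 * a) • fN + hN + (c - b + a) • kN) = 2 * b ∧
    LinearIndependent ℤ ![eN + (2 * a) • fN, eN + (2 * b - 2 * a) • fN + hN + (c - b + a) • kN] ∧
    epsN (eN + (2 * a) • fN) = 1 ∧
    epsN (eN + (2 * b - 2 * a) • fN + hN + (c - b + a) • kN) = 1 := by
  have hv : (eN + (2 * a) • fN) = ![1, 2 * a, 0, 0, 0, 0, 0, 0, 0, 0, 0, 0] := by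
    funext i; fin_cases i <;> simp [eN, fN, Pi.single_apply] <;> rfl
  have hw : (eN + (2 * b - 2 * a) • fN + hN + (c - b + a) • kN) =
      ![1, 2 * b - 2 * a, 1, c - b + a, 0, 0, 0, 0, 0, 0, 0, 0] := by
    funext i; fin_cases i <;> simp [eN, fN, hN, kN, Pi.single_apply] <;> rfl
  have hef : (eN + fN) = ![1, 1, 0, 0, 0, 0, 0, 0, 0, 0, 0, 0] := by
    funext i; fin_cases i <;> simp [eN, fN, Pi.single_apply] <;> rfl
  refine ⟨?_, ?_, ?_, ?_, ?_, ?_⟩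
  · rw [hv]
    simp [Nform, NGram, mulVec, dotProduct, Fin.sum_univ_succ]
    try ring
  · rw [hw]
    simp [Nform, NGram, mulVec, dotProduct, Fin.sum_univ_succ]
    try ring
  · rw [hv, hw]
    simp [Nform, NGram, mulVec, dotProduct, Fin.sum_univ_succ]
    try ring
  · rw [LinearIndependent.pair_iff]
    intro s t h
    rw [hv, hw] at h
    have h2 := congrFun h 2
    simp at h2
    have h0 := congrFun h 0
    rw [h2] at h0
    simp at h0
    exact ⟨h0, h2⟩
  · have h1 : Nform (eN + (2 * a) • fN) (eN + fN) = 1 + 2 * a := by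
      rw [hv, hef]
      simp [Nform, NGram, mulVec, dotProduct, Fin.sum_univ_succ]
    rw [epsN, h1]
    push_cast
    rw [show ((2 : ZMod 2) = 0) from rfl]
    ring
  · have h1 : Nform (eN + (2 * b - 2 * a) • fN + hN + (c - b + a) • kN) (eN + fN) =
        1 + 2 * (b - a) := by
      rw [hw, hef]
      simp [Nform, NGram, mulVec, dotProduct, Fin.sum_univ_succ]
      ring
    rw [epsN, h1]
    push_cast
    rw [show ((2 : ZMod 2) = 0) from rfl]
    ring
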